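/- Suppose nonnegative combinations of the rays r^1, …, r^k span R^m and L ⊂ R^m is a polytope containing f in its interior. Let L_B be the convex hull of the boundary points f + r^j/ψ_L(r^j), j = 1,…,k, where ψ_L is the gauge of L − f. Then f lies in the interior of L_B, L_B has rays going into its corners, and the L-cut coincides with the L_B-cut, i.e., ψ_L(r^j) = ψ_{L_B}(r^j) for all j. -/

import Mathlib

open Pointwise

/-- If nonnegative combinations of the rays `r¹, …, r^k` span `ℝ^m`
and `L` is a polytope with `f` in its interior, then `f` lies in the interior of
`L_B = conv{f + r^j/ψ_L(r^j)}`, every vertex of `L_B` is one of these boundary points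
(i.e. `L_B` has rays going into its corners), and the gauges of `L − f` and `L_B − f`
agree on every ray, so the `L`-cut and `L_B`-cut coincide. -/
theorem stmt_19 {m k : ℕ} (hk : 1 ≤ k)
    (L : Set (Fin m → ℝ)) (V : Finset (Fin m → ℝ))
    (hL : L = convexHull ℝ (V : Set _))
    (f : Fin m → ℝ) (hf : f ∈ interior L)
    (r : Fin k → Fin m → ℝ) (hrne : ∀ j, r j ≠ 0)
    (hspan : ∀ x : Fin m → ℝ, ∃ s : Fin k → ℝ, (∀ j, 0 ≤ s j) ∧ x = ∑ j, s j • r j)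
    (ψ : (Fin m → ℝ) → ℝ) (hψ : ψ = gauge ((fun x => x - f) '' L))
    (bpt : Fin k → Fin m → ℝ) (hbpt : ∀ j, bpt j = f + (ψ (r j))⁻¹ • r j)
    (LB : Set (Fin m → ℝ)) (hLB : LB = convexHull ℝ (Set.range bpt)) :
    f ∈ interior LB ∧
    (∀ v ∈ Set.extremePoints ℝ LB, ∃ j, v = bpt j) ∧
    (∀ j, ψ (r j) = gauge ((fun x => x - f) '' LB) (r j)) := by
  have himg : ∀ S : Set (Fin m → ℝ), (fun x => x - f) '' S = (-f) +ᵥ S := by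
    intro S
    simp only [← Set.image_vadd]
    congr 1
    funext x
    simp [vadd_eq_add, sub_eq_neg_add]
  set K : Set (Fin m → ℝ) := (fun x => x - f) '' L with hK
  -- basic properties of K
  have hLconv : Convex ℝ L := hL ▸ convex_convexHull ℝ _
  have hKconv : Convex ℝ K := by
    rw [hK, himg]
    exact hLconv.vadd _
  have hK0mem : (0 : Fin m → ℝ) ∈ interior K := by
    have h := (Homeomorph.subRight f).image_interior L
    rw [show ⇑(Homeomorph.subRight f) = (fun x => x - f) from rfl] at h
    rw [hK, ← h]
    exact ⟨f, hf, by simp⟩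
  have hKnhds : K ∈ nhds (0 : Fin m → ℝ) := mem_interior_iff_mem_nhds.mp hK0mem
  have hKabs : Absorbent ℝ K := absorbent_nhds_zero hKnhds
  have hKcompact : IsCompact K := by
    rw [hK, hL]
    exact (V.finite_toSet.isCompact_convexHull ℝ).image (continuous_id.sub continuous_const)
  have hKclosed : IsClosed K := hKcompact.isClosed
  have hKbdd : Bornology.IsVonNBounded ℝ K := NormedSpace.isVonNBounded_of_isBounded ℝ hKcompact.isBounded
  have hψpos : ∀ j, 0 < ψ (r j) := fun j => by
    rw [hψ]
    exact (gauge_pos hKabs hKbdd).2 (hrne j)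
  -- the boundary directions
  set p : Fin k → (Fin m → ℝ) := fun j => (ψ (r j))⁻¹ • r j with hp
  have hpK : ∀ j, p j ∈ K := by
    intro j
    have h1 : gauge K (p j) ≤ 1 := by
      rw [hp]
      rw [gauge_smul_of_nonneg (inv_nonneg.2 (hψpos j).le) (r j), smul_eq_mul, ← hψ,
        inv_mul_cancel₀ (hψpos j).ne']
    have := (gauge_le_one_iff_mem_closure hKconv hKnhds).1 h1
    rwa [hKclosed.closure_eq] at this
  set C : Set (Fin m → ℝ) := (fun x => x - f) '' LB with hC
  have hCeq : C = convexHull ℝ (Set.range p) := by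
    have hr2 : (-f) +ᵥ Set.range bpt = Set.range p := by
      rw [← Set.image_vadd, ← Set.range_comp]
      refine congrArg Set.range (funext fun j => ?_)
      show (-f) +ᵥ bpt j = p j
      rw [hbpt j, hp]
      simp [vadd_eq_add, neg_add_cancel_left]
    rw [hC, himg, hLB, ← convexHull_vadd, hr2]
  have hCconv : Convex ℝ C := hCeq ▸ convex_convexHull ℝ _
  -- nonnegative combinations land in C after normalization
  have key : ∀ (w : Fin k → ℝ), (∀ j, 0 ≤ w j) → (0 < ∑ j, w j) →
      (∑ j, w j)⁻¹ • (∑ j, w j • p j) ∈ C := by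
    intro w hw0 hwT
    rw [hCeq]
    have := Finset.centerMass_mem_convexHull Finset.univ (fun j _ => hw0 j) hwT
      (fun j _ => Set.mem_range_self (f := p) j)
    simpa [Finset.centerMass] using this
  -- coefficients for an arbitrary x
  have hrep : ∀ x : Fin m → ℝ, ∃ c : Fin k → ℝ, (∀ j, 0 ≤ c j) ∧ x = ∑ j, c j • p j := by
    intro x
    obtain ⟨s, hs0, hsum⟩ := hspan x
    refine ⟨fun j => s j * ψ (r j), fun j => mul_nonneg (hs0 j) (hψpos j).le, ?_⟩
    rw [hsum]
    refine Finset.sum_congr rfl fun j _ => ?_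
    rw [hp, smul_smul, mul_assoc, mul_inv_cancel₀ (hψpos j).ne', mul_one]
  -- 0 ∈ C
  have h0C : (0 : Fin m → ℝ) ∈ C := by
    obtain ⟨c, hc0, hceq⟩ := hrep (-(p ⟨0, hk⟩))
    set j0 : Fin k := ⟨0, hk⟩ with hj0
    set w : Fin k → ℝ := fun j => c j + (if j = j0 then 1 else 0) with hw
    have hw0 : ∀ j, 0 ≤ w j := fun j => by
      rw [hw]; dsimp only; split
      · linarith [hc0 j]
      · simpa using hc0 j
    have hwT : 0 < ∑ j, w j := by
      rw [hw, Finset.sum_add_distrib]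
      have h1 : (∑ j, if j = j0 then (1:ℝ) else 0) = 1 := by simp
      have h2 : 0 ≤ ∑ j, c j := Finset.sum_nonneg fun j _ => hc0 j
      rw [h1]; linarith
    have hsum0 : (∑ j, w j • p j) = 0 := by
      rw [hw]
      simp only [add_smul, ite_smul, one_smul, zero_smul]
      rw [Finset.sum_add_distrib, Finset.sum_ite_eq' Finset.univ j0 p]
      simp [← hceq]
    have := key w hw0 hwT
    rwa [hsum0, smul_zero] at this
  -- every ray from 0 eventually enters C
  have hscale : ∀ x : Fin m → ℝ, ∃ t : ℝ, 0 < t ∧ t • x ∈ C := by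
    intro x
    obtain ⟨c, hc0, hceq⟩ := hrep x
    by_cases hT : ∑ j, c j = 0
    · have hz : ∀ j ∈ Finset.univ, c j = 0 :=
        (Finset.sum_eq_zero_iff_of_nonneg (fun j _ => hc0 j)).1 hT
      have hx0 : x = 0 := by
        rw [hceq]
        exact Finset.sum_eq_zero fun j hj => by rw [hz j hj, zero_smul]
      exact ⟨1, one_pos, by rw [hx0, smul_zero]; exact h0C⟩
    · have hTpos : 0 < ∑ j, c j :=
        lt_of_le_of_ne (Finset.sum_nonneg fun j _ => hc0 j) (Ne.symm hT)
      refine ⟨(∑ j, c j)⁻¹, inv_pos.2 hTpos, ?_⟩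
      rw [hceq]
      exact key c hc0 hTpos
  -- 0 is in the interior of C
  have hC0int : (0 : Fin m → ℝ) ∈ interior C := by
    rcases Nat.eq_zero_or_pos m with hm | hm
    · haveI : IsEmpty (Fin m) := by rw [hm]; infer_instance
      haveI : Subsingleton (Fin m → ℝ) := ⟨fun a b => funext fun i => isEmptyElim i⟩
      have hCu : C = Set.univ := Set.eq_univ_of_forall fun x => by
        rw [Subsingleton.elim x (0 : Fin m → ℝ)]; exact h0C
      rw [hCu, interior_univ]; trivial
    · haveI : Nonempty (Fin m) := ⟨⟨0, hm⟩⟩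
      choose a ha using fun i : Fin m => hscale (Pi.single i 1)
      choose b hb using fun i : Fin m => hscale (-(Pi.single i 1))
      set ε : ℝ := Finset.univ.inf' Finset.univ_nonempty (fun i => min (a i) (b i)) with hε
      have hεpos : 0 < ε := by
        rw [hε, Finset.lt_inf'_iff]
        exact fun i _ => lt_min (ha i).1 (hb i).1
      have hεa : ∀ i, ε ≤ a i := fun i =>
        le_trans (Finset.inf'_le _ (Finset.mem_univ i)) (min_le_left _ _)
      have hεb : ∀ i, ε ≤ b i := fun i =>
        le_trans (Finset.inf'_le _ (Finset.mem_univ i)) (min_le_right _ _)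
      -- the l¹ cross-polytope of radius ε is inside C
      have hball : ∀ x : Fin m → ℝ, (∑ i, |x i|) ≤ ε → x ∈ C := by
        intro x hx
        set t : Fin m → ℝ := fun i => if 0 ≤ x i then a i else b i with ht
        set wpt : Fin m → (Fin m → ℝ) := fun i =>
          if 0 ≤ x i then (a i) • (Pi.single i 1 : Fin m → ℝ) else (b i) • (-(Pi.single i 1 : Fin m → ℝ)) with hwpt
        have hwptC : ∀ i, wpt i ∈ C := by
          intro i; rw [hwpt]; dsimp only
          split
          · exact (ha i).2
          · exact (hb i).2
        have htpos : ∀ i, 0 < t i := by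
          intro i; rw [ht]; dsimp only; split
          · exact (ha i).1
          · exact (hb i).1
        have htε : ∀ i, ε ≤ t i := by
          intro i; rw [ht]; dsimp only; split
          · exact hεa i
          · exact hεb i
        set lam : Fin m → ℝ := fun i => |x i| / t i with hlam
        have hlam0 : ∀ i, 0 ≤ lam i := fun i => div_nonneg (abs_nonneg _) (htpos i).le
        have hsingle : ∀ i : Fin m, (x i) • (Pi.single i 1 : Fin m → ℝ) = Pi.single i (x i) := by
          intro i
          funext l
          simp only [Pi.smul_apply, Pi.single_apply, smul_eq_mul]
          split_ifs <;> simp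
        have hcomb : ∀ i, lam i • wpt i = Pi.single i (x i) := by
          intro i
          rw [hlam, hwpt, ht]
          dsimp only
          by_cases hxi : 0 ≤ x i
          · rw [if_pos hxi, abs_of_nonneg hxi]
            rw [if_pos hxi]
            rw [smul_smul, div_mul_cancel₀ _ (ha i).1.ne', hsingle i]
          · rw [if_neg hxi, abs_of_neg (lt_of_not_ge hxi)]
            rw [if_neg hxi]
            rw [smul_smul, div_mul_cancel₀ _ (hb i).1.ne', neg_smul_neg, hsingle i]
        have hxsum : x = ∑ i, lam i • wpt i := by
          simp_rw [hcomb]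
          exact (Finset.univ_sum_single x).symm
        set S : ℝ := ∑ i, lam i with hS
        have hS0 : 0 ≤ S := Finset.sum_nonneg fun i _ => hlam0 i
        have hS1 : S ≤ 1 := by
          have h1 : ∀ i, lam i ≤ |x i| / ε := fun i =>
            div_le_div_of_nonneg_left (abs_nonneg _) hεpos (htε i)
          calc S ≤ ∑ i, |x i| / ε := Finset.sum_le_sum fun i _ => h1 i
            _ = (∑ i, |x i|) / ε := by rw [Finset.sum_div]
            _ ≤ ε / ε := by gcongr
            _ = 1 := div_self hεpos.ne'
        by_cases hSz : S = 0
        · have hz : ∀ i ∈ Finset.univ, lam i = 0 :=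
            (Finset.sum_eq_zero_iff_of_nonneg (fun i _ => hlam0 i)).1 hSz
          have hx0 : x = 0 := by
            rw [hxsum]
            exact Finset.sum_eq_zero fun i hi => by rw [hz i hi, zero_smul]
          rw [hx0]; exact h0C
        · have hSpos : 0 < S := lt_of_le_of_ne hS0 (Ne.symm hSz)
          have hzC : S⁻¹ • x ∈ C := by
            have := Finset.centerMass_mem_convexHull Finset.univ (fun i _ => hlam0 i)
              (hS ▸ hSpos) (fun i _ => hwptC i)
            rw [hCconv.convexHull_eq] at this
            simpa [Finset.centerMass, ← hS, ← hxsum] using this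
          have := hCconv hzC h0C hSpos.le (by linarith : (0:ℝ) ≤ 1 - S) (by ring)
          rwa [smul_zero, add_zero, smul_inv_smul₀ hSz] at this
      -- turn it into a metric ball
      have hsub : Metric.ball (0 : Fin m → ℝ) (ε / m) ⊆ C := by
        intro x hxb
        apply hball
        have hn : ‖x‖ < ε / m := by simpa using hxb
        have h1 : ∀ i, |x i| ≤ ‖x‖ := fun i => by
          simpa [Real.norm_eq_abs] using norm_le_pi_norm x i
        calc (∑ i, |x i|) ≤ ∑ _i : Fin m, ‖x‖ := Finset.sum_le_sum fun i _ => h1 i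
          _ = m * ‖x‖ := by simp [mul_comm]
          _ ≤ m * (ε / m) := by
              apply mul_le_mul_of_nonneg_left hn.le (by positivity)
          _ = ε := by field_simp
      exact mem_interior_iff_mem_nhds.2 (Filter.mem_of_superset
        (Metric.ball_mem_nhds 0 (by positivity)) hsub)
  -- conclusion 1
  have hfint : f ∈ interior LB := by
    have h := (Homeomorph.subRight f).image_interior LB
    rw [show ⇑(Homeomorph.subRight f) = (fun x => x - f) from rfl] at h
    have h2 := hC0int
    rw [hC] at h2
    rw [← h] at h2
    obtain ⟨y, hy, hy0⟩ := h2
    have hyf : y = f := sub_eq_zero.mp hy0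
    rwa [← hyf]
  refine ⟨hfint, ?_, ?_⟩
  · intro v hv
    rw [hLB] at hv
    obtain ⟨j, hj⟩ := extremePoints_convexHull_subset hv
    exact ⟨j, hj.symm⟩
  · intro j
    have hCnhds : C ∈ nhds (0 : Fin m → ℝ) := mem_interior_iff_mem_nhds.1 hC0int
    have hCabs : Absorbent ℝ C := absorbent_nhds_zero hCnhds
    have hCK : C ⊆ K := by
      rw [hCeq]
      exact convexHull_min (Set.range_subset_iff.2 hpK) hKconv
    have hge : ψ (r j) ≤ gauge C (r j) := by
      rw [hψ]
      exact gauge_mono hCabs hCK (r j)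
    have hpC : p j ∈ C := hCeq ▸ subset_convexHull ℝ _ (Set.mem_range_self j)
    have h1 : gauge C (p j) ≤ 1 := gauge_le_one_of_mem hpC
    have hr' : r j = ψ (r j) • p j := (smul_inv_smul₀ (hψpos j).ne' _).symm
    have hle : gauge C (r j) ≤ ψ (r j) := by
      have h2 : gauge C (ψ (r j) • p j) ≤ ψ (r j) * 1 := by
        rw [gauge_smul_of_nonneg (hψpos j).le, smul_eq_mul]
        exact mul_le_mul_of_nonneg_left h1 (hψpos j).le
      rw [← hr', mul_one] at h2
      exact h2
    linarith
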